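/- arXiv:1412.2976 — 2 statements merged into one kernel-verified Lean document; each statement's English description precedes it below -/
import Mathlib

section
/- Let R be a *-ring, p ∈ R a projector (p² = p = p*), and a, b ∈ R Moore-Penrose invertible with a*p = pa* and b*p = pb*. Then ap + b(1-p) is Moore-Penrose invertible and (ap + b(1-p))† = a†p + b†(1-p). -/
/-- `b` is a Moore-Penrose inverse of `a`. -/
def IsMP {R : Type*} [Ring R] [StarRing R] (a b : R) : Prop :=
  a * b * a = a ∧ b * a * b = b ∧ star (a * b) = a * b ∧ star (b * a) = b * a

/-- `p` is a projector: `p² = p = p*`. -/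
def IsProjector {R : Type*} [Ring R] [StarRing R] (p : R) : Prop :=
  p * p = p ∧ star p = p

/-- `a` is *-cancellable. -/
def StarCancellable {R : Type*} [Ring R] [StarRing R] (a : R) : Prop :=
  (∀ x : R, star a * a * x = 0 → a * x = 0) ∧ (∀ x : R, x * (a * star a) = 0 → x * a = 0)

section Helpers

variable {R : Type*} [Ring R] [StarRing R]

/-- If `x` is self-adjoint and commutes with `a` and `star a`, it commutes with `a * a'`. -/
lemma comm_e {a a' x : R} (h : IsMP a a')
    (hx : star x = x) (hxa : x * a = a * x) (hxs : x * star a = star a * x) :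
    x * (a * a') = (a * a') * x := by
  obtain ⟨h1, h2, h3, h4⟩ := h
  have hae : star a * (a * a') = star a := by
    conv_lhs => rw [← h3, ← star_mul, h1]
  have hs : star a' * star a = a * a' := by rw [← star_mul, h3]
  have ha'' : a' * (star a' * star a) = a' := by rw [hs, ← mul_assoc, h2]
  have key1 : (a * a') * (x * (1 - a * a')) = 0 := by
    have s1 : star a * (x * (1 - a * a')) = 0 := by
      rw [← mul_assoc, ← hxs, mul_assoc, mul_sub, mul_one, hae, sub_self, mul_zero]
    have s2 : a' * (x * (1 - a * a')) = 0 := by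
      calc a' * (x * (1 - a * a')) = a' * (star a' * star a) * (x * (1 - a * a')) := by
            rw [ha'']
        _ = a' * star a' * (star a * (x * (1 - a * a'))) := by noncomm_ring
        _ = 0 := by rw [s1, mul_zero]
    rw [mul_assoc, s2, mul_zero]
  have key2 : (1 - a * a') * (x * (a * a')) = 0 := by
    have h0 := congrArg star key1
    rw [star_zero, star_mul, star_mul, star_sub, star_one, h3, hx] at h0
    rw [← mul_assoc]
    exact h0
  have t1 : (a * a') * x = (a * a') * (x * (a * a')) := by
    have h0 := key1
    rw [mul_sub, mul_one, mul_sub, sub_eq_zero] at h0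
    exact h0
  have t2 : x * (a * a') = (a * a') * (x * (a * a')) := by
    have h0 := key2
    rw [sub_mul, one_mul, sub_eq_zero] at h0
    exact h0
  exact t2.trans t1.symm

lemma isMP_star {a a' : R} (h : IsMP a a') : IsMP (star a) (star a') := by
  obtain ⟨h1, h2, h3, h4⟩ := h
  refine ⟨?_, ?_, ?_, ?_⟩
  · have h0 := congrArg star h1
    rw [star_mul, star_mul] at h0
    rw [mul_assoc]
    exact h0
  · have h0 := congrArg star h2
    rw [star_mul, star_mul] at h0
    rw [mul_assoc]
    exact h0
  · rw [← star_mul, star_star, h4]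
  · rw [← star_mul, star_star, h3]

/-- `x` commutes with `a' * a` too. -/
lemma comm_f {a a' x : R} (h : IsMP a a')
    (hx : star x = x) (hxa : x * a = a * x) (hxs : x * star a = star a * x) :
    x * (a' * a) = (a' * a) * x := by
  have h' := isMP_star h
  have := comm_e h' hx hxs (by rwa [star_star])
  rwa [← star_mul, h.2.2.2] at this

/-- Main commutation lemma: `x` commutes with the Moore-Penrose inverse. -/
lemma comm_mp {a a' x : R} (h : IsMP a a')
    (hx : star x = x) (hxa : x * a = a * x) (hxs : x * star a = star a * x) :
    x * a' = a' * x := by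
  obtain ⟨h1, h2, h3, h4⟩ := h
  have he := comm_e ⟨h1, h2, h3, h4⟩ hx hxa hxs
  have hf := comm_f ⟨h1, h2, h3, h4⟩ hx hxa hxs
  have awa : a * (a' * x - x * a') * a = 0 := by
    have e1 : a * (a' * x) * a = x * a := by
      calc a * (a' * x) * a = (a * a') * x * a := by noncomm_ring
        _ = x * (a * a') * a := by rw [he]
        _ = x * (a * a' * a) := by noncomm_ring
        _ = x * a := by rw [h1]
    have e2 : a * (x * a') * a = x * a := by
      calc a * (x * a') * a = (a * x) * a' * a := by noncomm_ring
        _ = (x * a) * a' * a := by rw [hxa]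
        _ = x * (a * a' * a) := by noncomm_ring
        _ = x * a := by rw [h1]
    rw [mul_sub, sub_mul, e1, e2, sub_self]
  have fw : (a' * a) * (a' * x - x * a') = a' * x - x * a' := by
    have e1 : (a' * a) * (a' * x) = a' * x := by
      rw [← mul_assoc, h2]
    have e2 : (a' * a) * (x * a') = x * a' := by
      calc (a' * a) * (x * a') = ((a' * a) * x) * a' := by noncomm_ring
        _ = (x * (a' * a)) * a' := by rw [hf]
        _ = x * (a' * a * a') := by noncomm_ring
        _ = x * a' := by rw [h2]
    rw [mul_sub, e1, e2]
  have we : (a' * x - x * a') * (a * a') = a' * x - x * a' := by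
    have e1 : (a' * x) * (a * a') = a' * x := by
      calc (a' * x) * (a * a') = a' * (x * (a * a')) := by noncomm_ring
        _ = a' * ((a * a') * x) := by rw [he]
        _ = (a' * a * a') * x := by noncomm_ring
        _ = a' * x := by rw [h2]
    have e2 : (x * a') * (a * a') = x * a' := by
      calc (x * a') * (a * a') = x * (a' * a * a') := by noncomm_ring
        _ = x * a' := by rw [h2]
    rw [sub_mul, e1, e2]
  have hz : a' * x - x * a' = 0 := by
    calc a' * x - x * a' = (a' * a) * (a' * x - x * a') * (a * a') := by rw [fw, we]
      _ = a' * (a * (a' * x - x * a') * a) * a' := by noncomm_ring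
      _ = 0 := by rw [awa, mul_zero, zero_mul]
  exact (sub_eq_zero.mp hz).symm

lemma prod_split {R : Type*} [Ring R] (p x y u v : R) (hpp : p * p = p)
    (hu : p * u = u * p) (hv : p * v = v * p) :
    (x * p + y * (1 - p)) * (u * p + v * (1 - p)) = (x * u) * p + (y * v) * (1 - p) := by
  have hq0 : p * (1 - p) = 0 := by rw [mul_sub, mul_one, hpp, sub_self]
  have h0q : (1 - p) * p = 0 := by rw [sub_mul, one_mul, hpp, sub_self]
  have hqq : (1 - p) * (1 - p) = 1 - p := by rw [sub_mul, one_mul, hq0, sub_zero]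
  have hu' : (1 - p) * u = u * (1 - p) := by
    rw [sub_mul, mul_sub, one_mul, mul_one, hu]
  have hv' : (1 - p) * v = v * (1 - p) := by
    rw [sub_mul, mul_sub, one_mul, mul_one, hv]
  have A : (x * p) * (u * p) = (x * u) * p := by
    calc (x * p) * (u * p) = x * ((p * u) * p) := by noncomm_ring
      _ = x * (u * (p * p)) := by rw [hu, mul_assoc]
      _ = (x * u) * p := by rw [hpp, mul_assoc]
  have B : (x * p) * (v * (1 - p)) = 0 := by
    calc (x * p) * (v * (1 - p)) = x * ((p * v) * (1 - p)) := by noncomm_ring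
      _ = x * (v * (p * (1 - p))) := by rw [hv, mul_assoc]
      _ = 0 := by rw [hq0, mul_zero, mul_zero]
  have C : (y * (1 - p)) * (u * p) = 0 := by
    calc (y * (1 - p)) * (u * p) = y * (((1 - p) * u) * p) := by noncomm_ring
      _ = y * (u * ((1 - p) * p)) := by rw [hu', mul_assoc]
      _ = 0 := by rw [h0q, mul_zero, mul_zero]
  have D : (y * (1 - p)) * (v * (1 - p)) = (y * v) * (1 - p) := by
    calc (y * (1 - p)) * (v * (1 - p)) = y * (((1 - p) * v) * (1 - p)) := by noncomm_ring
      _ = y * (v * ((1 - p) * (1 - p))) := by rw [hv', mul_assoc]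
      _ = (y * v) * (1 - p) := by rw [hqq, mul_assoc]
  rw [add_mul, mul_add, mul_add, A, B, C, D, add_zero, zero_add]

end Helpers

theorem stmt3 {R : Type*} [Ring R] [StarRing R] (p a b a' b' : R)
    (hp : IsProjector p) (ha : IsMP a a') (hb : IsMP b b')
    (hap : star a * p = p * star a) (hbp : star b * p = p * star b) :
    IsMP (a * p + b * (1 - p)) (a' * p + b' * (1 - p)) := by
  obtain ⟨hpp, hps⟩ := hp
  have hpa : p * a = a * p := by
    have h0 := congrArg star hap
    rwa [star_mul, star_mul, star_star, hps] at h0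
  have hpb : p * b = b * p := by
    have h0 := congrArg star hbp
    rwa [star_mul, star_mul, star_star, hps] at h0
  have hpa' : p * a' = a' * p := comm_mp ha hps hpa hap.symm
  have hpb' : p * b' = b' * p := comm_mp hb hps hpb hbp.symm
  have hpaa' : p * (a * a') = (a * a') * p := comm_e ha hps hpa hap.symm
  have hpbb' : p * (b * b') = (b * b') * p := comm_e hb hps hpb hbp.symm
  have hpa'a : p * (a' * a) = (a' * a) * p := comm_f ha hps hpa hap.symm
  have hpb'b : p * (b' * b) = (b' * b) * p := comm_f hb hps hpb hbp.symm
  have hqbb' : (1 - p) * (b * b') = (b * b') * (1 - p) := by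
    rw [sub_mul, mul_sub, one_mul, mul_one, hpbb']
  have hqb'b : (1 - p) * (b' * b) = (b' * b) * (1 - p) := by
    rw [sub_mul, mul_sub, one_mul, mul_one, hpb'b]
  have e1 : (a * p + b * (1 - p)) * (a' * p + b' * (1 - p)) =
      (a * a') * p + (b * b') * (1 - p) := prod_split p a b a' b' hpp hpa' hpb'
  have e2 : (a' * p + b' * (1 - p)) * (a * p + b * (1 - p)) =
      (a' * a) * p + (b' * b) * (1 - p) := prod_split p a' b' a b hpp hpa hpb
  refine ⟨?_, ?_, ?_, ?_⟩
  · rw [e1, prod_split p (a * a') (b * b') a b hpp hpa hpb, ha.1, hb.1]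
  · rw [e2, prod_split p (a' * a) (b' * b) a' b' hpp hpa' hpb', ha.2.1, hb.2.1]
  · rw [e1, star_add, star_mul (a * a') p, star_mul (b * b') (1 - p), ha.2.2.1, hb.2.2.1,
      hps, star_sub, star_one, hps, hpaa', hqbb']
  · rw [e2, star_add, star_mul (a' * a) p, star_mul (b' * b) (1 - p), ha.2.2.2, hb.2.2.2,
      hps, star_sub, star_one, hps, hpa'a, hqb'b]
end

section
/- Let R be a *-ring and p, q projectors with p - q Moore-Penrose invertible. Then q(p-q)† = (p-q)†(1-p). -/
/-- The Moore–Penrose inverse is unique. -/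
lemma mp_unique {R : Type*} [Ring R] [StarRing R] (a b c : R)
    (hb : IsMP a b) (hc : IsMP a c) : b = c := by
  obtain ⟨hb1, hb2, hb3, hb4⟩ := hb
  obtain ⟨hc1, hc2, hc3, hc4⟩ := hc
  have hab : a * b = a * c := by
    have h : a * c * (a * b) = a * b := by rw [← mul_assoc, hc1]
    calc a * b = star (a * b) := hb3.symm
      _ = star (a * c * (a * b)) := by rw [h]
      _ = star (a * b) * star (a * c) := by rw [star_mul]
      _ = (a * b) * (a * c) := by rw [hb3, hc3]
      _ = a * b * a * c := by rw [mul_assoc (a*b) a c]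
      _ = a * c := by rw [hb1]
  have hba : b * a = c * a := by
    have h : b * a * (c * a) = b * a := by
      rw [mul_assoc, ← mul_assoc a c a, hc1]
    calc b * a = star (b * a) := hb4.symm
      _ = star (b * a * (c * a)) := by rw [h]
      _ = star (c * a) * star (b * a) := by rw [star_mul]
      _ = (c * a) * (b * a) := by rw [hb4, hc4]
      _ = c * (a * b * a) := by rw [mul_assoc, ← mul_assoc a b a]
      _ = c * a := by rw [hb1]
  calc b = b * a * b := hb2.symm
    _ = b * (a * c) := by rw [mul_assoc, hab]
    _ = c * a * c := by rw [← mul_assoc, hba]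
    _ = c := hc2

/-- If `x` commutes with `b`, and `c` is a commuting inner inverse of `b`,
then `x` commutes with `c`. -/
lemma comm_mp_s10 {R : Type*} [Ring R] (b c x : R)
    (h1 : b * c * b = b) (h2 : c * b * c = c) (h3 : b * c = c * b)
    (h4 : x * b = b * x) : x * c = c * x := by
  have hbg : b * (b * c) = b := by rw [h3, ← mul_assoc, h1]
  have hcg : c * (b * c) = c := by rw [← mul_assoc]; exact h2
  have hgc : (b * c) * c = c := by rw [h3]; exact h2
  have f1 : b * x * (b * c) = b * x := by
    rw [← h4, mul_assoc, hbg, h4]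
  have f2 : (b * c) * (x * b) = x * b := by
    rw [h4, ← mul_assoc, h1]
  have a1 : (b * c) * x * (b * c) = (b * c) * x := by
    calc (b * c) * x * (b * c) = c * (b * x * (b * c)) := by
          nth_rewrite 1 [h3]
          simp only [mul_assoc]
      _ = c * (b * x) := by rw [f1]
      _ = (b * c) * x := by rw [← mul_assoc, ← h3]
  have a2 : (b * c) * (x * (b * c)) = x * (b * c) := by
    have := congrArg (· * c) f2
    simpa only [mul_assoc] using this
  have hxg : x * (b * c) = (b * c) * x := by
    calc x * (b * c) = (b * c) * (x * (b * c)) := a2.symm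
      _ = (b * c) * x * (b * c) := (mul_assoc (b*c) x (b*c)).symm
      _ = (b * c) * x := a1
  have b1 : c * x * (b * c) = c * x := by
    have h : c * x = c * ((b * c) * x) := by rw [← mul_assoc, hcg]
    calc c * x * (b * c) = c * ((b * c) * x) * (b * c) := by rw [← h]
      _ = c * ((b * c) * x * (b * c)) := by
          rw [mul_assoc c ((b*c)*x) (b*c)]
      _ = c * ((b * c) * x) := by rw [a1]
      _ = c * x := h.symm
  calc x * c = x * ((b * c) * c) := by rw [hgc]
    _ = x * (b * c) * c := by rw [← mul_assoc]
    _ = (b * c) * x * c := by rw [hxg]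
    _ = c * (b * x) * c := by rw [h3, mul_assoc c b x]
    _ = c * (x * b) * c := by rw [h4]
    _ = c * x * (b * c) := by
        simp only [mul_assoc]
    _ = c * x := b1

theorem stmt10 {R : Type*} [Ring R] [StarRing R] (p q d : R)
    (hp : IsProjector p) (hq : IsProjector q)
    (hd : IsMP (p - q) d) :
    q * d = d * (1 - p) := by
  obtain ⟨hd1, hd2, hd3, hd4⟩ := hd
  set a := p - q with hA
  have ha : star a = a := by rw [hA, star_sub, hp.2, hq.2]
  have h5 : a * star d = d * a := by
    conv_lhs => rw [← ha]
    rw [← star_mul]; exact hd4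
  have h6 : star d * a = a * d := by
    conv_lhs => rw [← ha]
    rw [← star_mul]; exact hd3
  have s1 : a * star d * a = a := by
    have h : star (a * star d * a) = a * (d * a) := by
      rw [star_mul, star_mul, star_star, ha]
    calc a * star d * a = star (star (a * star d * a)) := (star_star _).symm
      _ = star (a * (d * a)) := by rw [h]
      _ = star (a * d * a) := by rw [← mul_assoc]
      _ = star a := by rw [hd1]
      _ = a := ha
  have s2 : star d * a * star d = star d := by
    have h : star (star d * a * star d) = d * (a * d) := by
      rw [star_mul, star_mul, star_star, ha]
    calc star d * a * star d = star (star (star d * a * star d)) := (star_star _).symm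
      _ = star (d * (a * d)) := by rw [h]
      _ = star (d * a * d) := by rw [← mul_assoc]
      _ = star d := by rw [hd2]
  have s3 : star (a * star d) = a * star d := by
    rw [star_mul, star_star, ha, h5]
  have s4 : star (star d * a) = star d * a := by
    rw [star_mul, star_star, ha, h6]
  have hds : d = star d := mp_unique a d (star d) ⟨hd1, hd2, hd3, hd4⟩ ⟨s1, s2, s3, s4⟩
  have hcomm : a * d = d * a := by
    conv_lhs => rw [hds]
    exact h5
  have hdda : d * d * a = d := by
    rw [mul_assoc, ← hcomm, ← mul_assoc, hd2]
  have haadd : a * a * (d * d) = a * d := by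
    rw [mul_assoc a a (d*d), ← mul_assoc a d d, hcomm, ← mul_assoc, ← mul_assoc, hd1, hcomm]
  have hddaa : d * d * (a * a) = a * d := by
    rw [mul_assoc d d (a*a), ← mul_assoc d a a, ← hcomm, hd1, ← hcomm]
  have k1 : a * a * (d * d) * (a * a) = a * a := by
    rw [haadd, ← mul_assoc, hd1]
  have k2 : d * d * (a * a) * (d * d) = d * d := by
    rw [hddaa, hcomm, ← mul_assoc, hd2]
  have k3 : a * a * (d * d) = d * d * (a * a) := by rw [haadd, hddaa]
  -- q commutes with a^2
  have hq' : ∀ x : R, q * (q * x) = q * x := fun x => by rw [← mul_assoc, hq.1]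
  have hsq : a * a = p + q - p*q - q*p := by
    rw [hA, sub_mul, mul_sub, mul_sub, hp.1, hq.1]; abel
  have hq_sq : q * (a * a) = (a * a) * q := by
    rw [hsq]
    simp only [mul_sub, sub_mul, mul_add, add_mul, mul_assoc, hq.1, hq']
    abel
  have hq_dd : q * (d * d) = (d * d) * q :=
    comm_mp_s10 (a*a) (d*d) q k1 k2 k3 hq_sq
  have hq_dd' : (1 - q) * (d * d) = (d * d) * (1 - q) := by
    rw [sub_mul, one_mul, mul_sub, mul_one, hq_dd]
  have h1mq : (1 - q) * a = a * p := by
    rw [hA, sub_mul, one_mul, mul_sub, sub_mul, hp.1, hq.1]; abel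
  have key : (1 - q) * d = d * p := by
    calc (1 - q) * d = (1 - q) * (d * d * a) := by rw [hdda]
      _ = (1 - q) * (d * d) * a := by rw [← mul_assoc]
      _ = (d * d) * (1 - q) * a := by rw [hq_dd']
      _ = (d * d) * ((1 - q) * a) := by rw [mul_assoc]
      _ = (d * d) * (a * p) := by rw [h1mq]
      _ = (d * d) * a * p := by rw [← mul_assoc]
      _ = d * p := by rw [hdda]
  calc q * d = d - (1 - q) * d := by rw [sub_mul, one_mul]; abel
    _ = d - d * p := by rw [key]
    _ = d * (1 - p) := by rw [mul_sub, mul_one]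
end
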